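/- arXiv:1609.09551 — 2 statements merged into one kernel-verified Lean document; each statement's English description precedes it below -/
import Mathlib

section
/- Suppose q(0) ≠ 0, a ≥ 1, and either r = 0 or (r(0) ≠ 0 and b ≤ a). Then there exist C, D in the Iwahori subgroup 𝓑 such that C·(g·p(Y))·D is the monomial matrix with rows (−t^{2a}, 0, 0), (0, 0, t^{−a}), (0, t^{−a}, 0); in particular g·p(Y) lies in the corresponding Iwahori double coset 𝓑·w·𝓑 in SL_3(F). -/
/-! Statement 18 (Case 1 of the Proposition in §7 of "Cotangent bundle to the Flag
variety-I", for `SL₃`): if `q(0) ≠ 0`, `a ≥ 1`, and either `r = 0` or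
(`r(0) ≠ 0` and `b ≤ a`), then there are `C, D` in the Iwahori subgroup `𝓑` with
`C·(g·p(Y))·D` equal to the monomial matrix with rows
`(−t^{2a}, 0, 0)`, `(0, 0, t^{-a})`, `(0, t^{-a}, 0)`. -/

noncomputable section

/-- The field of formal Laurent series over `ℂ`. -/
abbrev FF : Type := LaurentSeries ℂ

/-- The uniformizer `t` of `ℂ((t))`. -/
def tF : FF := HahnSeries.single (1 : ℤ) (1 : ℂ)

/-- An element of `F = ℂ((t))` is integral if it lies in `A = ℂ[[t]]`,
i.e. all coefficients of negative index vanish. -/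
def Integral (x : FF) : Prop := ∀ m : ℤ, m < 0 → x.coeff m = 0

/-- Membership in the Iwahori subgroup `𝓑` of `SL₃(F)`: all entries integral,
determinant `1`, and the matrix of constant terms `h(0)` is upper triangular. -/
def MemIwahori (h : Matrix (Fin 3) (Fin 3) FF) : Prop :=
  h.det = 1 ∧ (∀ i j : Fin 3, Integral (h i j)) ∧
    ∀ i j : Fin 3, (j : ℕ) < (i : ℕ) → (h i j).coeff 0 = 0

/-- The matrix `g·p(Y)` where `Y = E₁₂ + E₂₃`, `g = −(E₁₃ + E₂₂ + E₃₁)` and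
`p(Y) = Id − t^{-a}·q·Y − t^{-b}·r·Y²`; explicitly it has rows
`(0, 0, −1)`, `(0, −1, t^{-a}q)`, `(−1, t^{-a}q, t^{-b}r)`. -/
def gpY (q r : PowerSeries ℂ) (a b : ℕ) : Matrix (Fin 3) (Fin 3) FF :=
  !![0,  0,                       -1;
     0,  -1,                      tF ^ (-(a : ℤ)) * (q : FF);
     -1, tF ^ (-(a : ℤ)) * (q : FF), tF ^ (-(b : ℤ)) * (r : FF)]

/-- The key algebraic identity, over an arbitrary commutative ring, with the
inverses `si` of `S` and `pi` of `P` given as explicit atoms. -/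
lemma key_mul {K : Type*} [CommRing K] (Q S P v si pi : K)
    (hsi : S * si = 1) (hpi : P * pi = 1) (hv : P ^ 2 * v = S - Q ^ 2) :
    !![1, P * Q * si, P ^ 2 * si; 0, 1, 0; 0, 0, 1] *
      !![0, 0, -1; 0, -1, pi * Q; -1, pi * Q, v] *
      !![S, 0, 0; P * Q, Q * si, -(P * v * si); P ^ 2, P * si, Q * si] =
      !![-P ^ 2, 0, 0; 0, 0, pi; 0, pi, 0] := by
  ext i j
  fin_cases i <;> fin_cases j <;>
    simp only [Fin.zero_eta, Fin.mk_one, Fin.reduceFinMk, Matrix.mul_apply, Fin.sum_univ_three,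
      Matrix.cons_val_zero, Matrix.cons_val_one, Matrix.head_cons, Matrix.cons_val_two,
      Matrix.tail_cons, Matrix.of_apply, Matrix.cons_val', Matrix.empty_val',
      Matrix.cons_val_fin_one, Matrix.head_fin_const]
  · linear_combination (P ^ 2 * si) * hv + (2 * P ^ 2 * Q ^ 2 * si) * hpi
  · linear_combination (P * si ^ 2) * hv + (P * si) * hsi + (2 * P * Q ^ 2 * si ^ 2) * hpi
  · linear_combination (Q * si ^ 2) * hv + (Q * si) * hsi +
      (Q * si ^ 2 * (Q ^ 2 - P ^ 2 * v)) * hpi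
  · linear_combination (P * Q) * hpi
  · linear_combination (Q * si) * hpi
  · linear_combination (si * pi) * hv + pi * hsi - (si * P * v) * hpi
  · linear_combination hv + (Q ^ 2) * hpi
  · linear_combination (si * pi) * hv + pi * hsi - (si * P * v) * hpi
  · linear_combination (-(Q * v * si)) * hpi

/-- Determinant of the right-hand Iwahori factor. -/
lemma key_det {K : Type*} [CommRing K] (Q S P v si : K)
    (hsi : S * si = 1) (hv : P ^ 2 * v = S - Q ^ 2) :
    (!![S, 0, 0; P * Q, Q * si, -(P * v * si); P ^ 2, P * si, Q * si] :
      Matrix (Fin 3) (Fin 3) K).det = 1 := by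
  rw [Matrix.det_fin_three]
  simp only [Matrix.cons_val_zero, Matrix.cons_val_one, Matrix.head_cons, Matrix.cons_val_two,
    Matrix.tail_cons, Matrix.of_apply, Matrix.cons_val', Matrix.empty_val',
    Matrix.cons_val_fin_one, Matrix.head_fin_const]
  linear_combination (S * si ^ 2) * hv + (S * si + 1) * hsi

set_option maxHeartbeats 6000000 in
open PowerSeries in
theorem stmt18 (q r : PowerSeries ℂ) (a b : ℕ) (ha : 1 ≤ a) (hb : 1 ≤ b)
    (hq : PowerSeries.constantCoeff q ≠ 0)
    (hr : r = 0 ∨ (PowerSeries.constantCoeff r ≠ 0 ∧ b ≤ a)) :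
    ∃ C D : Matrix (Fin 3) (Fin 3) FF, MemIwahori C ∧ MemIwahori D ∧
      C * gpY q r a b * D =
        !![-(tF ^ ((2 * a : ℕ) : ℤ)), 0, 0;
           0, 0, tF ^ (-(a : ℤ));
           0, tF ^ (-(a : ℤ)), 0] := by
  classical
  have htne : (tF : FF) ≠ 0 := HahnSeries.single_ne_zero one_ne_zero
  have hXt : ((X : ℂ⟦X⟧) : FF) = tF := by
    rw [PowerSeries.coe_X]; rfl
  have hXpow : ∀ n : ℕ, ((X ^ n : ℂ⟦X⟧) : FF) = tF ^ n := by
    intro n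
    rw [PowerSeries.coe_pow, hXt]
  obtain ⟨S, hS⟩ : ∃ S : ℂ⟦X⟧, S = q ^ 2 + X ^ (2 * a - b) * r := ⟨_, rfl⟩
  have hS0 : constantCoeff S ≠ 0 := by
    have h2 : constantCoeff (X ^ (2 * a - b) * r) = 0 := by
      rcases hr with h | ⟨h, hba⟩
      · simp [h]
      · have h1 : 2 * a - b ≠ 0 := by omega
        simp [map_mul, map_pow, constantCoeff_X, zero_pow h1]
    have : constantCoeff S = constantCoeff q ^ 2 := by
      simp [hS, map_add, map_pow, h2]
    rw [this]
    exact pow_ne_zero _ hq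
  have hSinv : S * S⁻¹ = 1 := PowerSeries.mul_inv_cancel _ hS0
  have hsi : ((S : FF)) * ((S⁻¹ : ℂ⟦X⟧) : FF) = 1 := by
    rw [← PowerSeries.coe_mul, hSinv, PowerSeries.coe_one]
  have hpi : (tF ^ a) * tF ^ (-(a : ℤ)) = 1 := by
    rw [← zpow_natCast tF a, ← zpow_add₀ htne]
    simp
  have hScast : (S : FF) = (q : FF) ^ 2 + ((X ^ (2 * a - b) * r : ℂ⟦X⟧) : FF) := by
    rw [hS, PowerSeries.coe_add, PowerSeries.coe_pow]
  have hv : (tF ^ a) ^ 2 * (tF ^ (-(b : ℤ)) * (r : FF)) = (S : FF) - (q : FF) ^ 2 := by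
    rcases hr with h | ⟨h, hba⟩
    · subst h
      simp [hScast]
    · have hpow : (tF ^ a) ^ 2 * tF ^ (-(b : ℤ)) = tF ^ (2 * a - b : ℕ) := by
        rw [← pow_mul, ← zpow_natCast tF (a * 2), ← zpow_add₀ htne,
          ← zpow_natCast tF (2 * a - b)]
        congr 1
        omega
      calc (tF ^ a) ^ 2 * (tF ^ (-(b : ℤ)) * (r : FF))
          = ((tF ^ a) ^ 2 * tF ^ (-(b : ℤ))) * (r : FF) := by ring
        _ = tF ^ (2 * a - b : ℕ) * (r : FF) := by rw [hpow]
        _ = ((X ^ (2 * a - b) * r : ℂ⟦X⟧) : FF) := by rw [PowerSeries.coe_mul, hXpow]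
        _ = (S : FF) - (q : FF) ^ 2 := by rw [hScast]; ring
  have hXab : tF ^ a * (tF ^ (-(b : ℤ)) * (r : FF)) = ((X ^ (a - b) * r : ℂ⟦X⟧) : FF) := by
    rcases hr with h | ⟨h, hba⟩
    · subst h
      simp
    · have hpow : tF ^ a * tF ^ (-(b : ℤ)) = tF ^ (a - b : ℕ) := by
        rw [← zpow_natCast tF a, ← zpow_add₀ htne, ← zpow_natCast tF (a - b)]
        congr 1
        omega
      calc tF ^ a * (tF ^ (-(b : ℤ)) * (r : FF))
          = (tF ^ a * tF ^ (-(b : ℤ))) * (r : FF) := by ring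
        _ = tF ^ (a - b : ℕ) * (r : FF) := by rw [hpow]
        _ = ((X ^ (a - b) * r : ℂ⟦X⟧) : FF) := by rw [PowerSeries.coe_mul, hXpow]
  -- integrality helpers
  have hIntC : ∀ p : ℂ⟦X⟧, Integral ((p : FF)) := by
    intro p m hm
    rw [PowerSeries.coeff_coe, if_pos hm]
  have hInt0 : Integral (0 : FF) := by intro m _; simp
  have hInt1 : Integral (1 : FF) := by rw [← PowerSeries.coe_one]; exact hIntC 1
  have hIntneg : ∀ x : FF, Integral x → Integral (-x) := by
    intro x hx m hm
    rw [HahnSeries.coeff_neg, hx m hm, neg_zero]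
  have hc0 : ∀ p : ℂ⟦X⟧, ((p : FF)).coeff (0 : ℤ) = constantCoeff p := by
    intro p
    rw [PowerSeries.coeff_coe]
    simp [PowerSeries.coeff_zero_eq_constantCoeff]
  -- cast forms of the entries
  have e1 : tF ^ a * (q : FF) * ((S⁻¹ : ℂ⟦X⟧) : FF) = ((X ^ a * q * S⁻¹ : ℂ⟦X⟧) : FF) := by
    rw [PowerSeries.coe_mul, PowerSeries.coe_mul, hXpow]
  have e5 : ((tF ^ a) ^ 2 : FF) = ((X ^ (2 * a) : ℂ⟦X⟧) : FF) := by
    rw [hXpow, pow_mul']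
  have e2 : (tF ^ a) ^ 2 * ((S⁻¹ : ℂ⟦X⟧) : FF) = ((X ^ (2 * a) * S⁻¹ : ℂ⟦X⟧) : FF) := by
    rw [PowerSeries.coe_mul, ← e5]
  have e3 : tF ^ a * (q : FF) = ((X ^ a * q : ℂ⟦X⟧) : FF) := by
    rw [PowerSeries.coe_mul, hXpow]
  have e4 : (q : FF) * ((S⁻¹ : ℂ⟦X⟧) : FF) = ((q * S⁻¹ : ℂ⟦X⟧) : FF) := by
    rw [PowerSeries.coe_mul]
  have e6 : tF ^ a * ((S⁻¹ : ℂ⟦X⟧) : FF) = ((X ^ a * S⁻¹ : ℂ⟦X⟧) : FF) := by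
    rw [PowerSeries.coe_mul, hXpow]
  have e7 : tF ^ a * (tF ^ (-(b : ℤ)) * (r : FF)) * ((S⁻¹ : ℂ⟦X⟧) : FF)
      = ((X ^ (a - b) * r * S⁻¹ : ℂ⟦X⟧) : FF) := by
    rw [hXab, ← PowerSeries.coe_mul]
  refine ⟨!![1, tF ^ a * (q : FF) * ((S⁻¹ : ℂ⟦X⟧) : FF),
               (tF ^ a) ^ 2 * ((S⁻¹ : ℂ⟦X⟧) : FF); 0, 1, 0; 0, 0, 1],
    !![(S : FF), 0, 0;
       tF ^ a * (q : FF), (q : FF) * ((S⁻¹ : ℂ⟦X⟧) : FF),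
         -(tF ^ a * (tF ^ (-(b : ℤ)) * (r : FF)) * ((S⁻¹ : ℂ⟦X⟧) : FF));
       (tF ^ a) ^ 2, tF ^ a * ((S⁻¹ : ℂ⟦X⟧) : FF), (q : FF) * ((S⁻¹ : ℂ⟦X⟧) : FF)],
    ⟨?_, ?_, ?_⟩, ⟨?_, ?_, ?_⟩, ?_⟩
  · -- det C = 1
    rw [Matrix.det_fin_three]
    simp only [Fin.zero_eta, Fin.mk_one, Fin.reduceFinMk, Matrix.cons_val_zero,
      Matrix.cons_val_one, Matrix.head_cons, Matrix.cons_val_two, Matrix.tail_cons,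
      Matrix.of_apply, Matrix.cons_val', Matrix.empty_val', Matrix.cons_val_fin_one,
      Matrix.head_fin_const]
    ring
  · -- entries of C integral
    intro i j
    fin_cases i <;> fin_cases j <;>
      simp only [Fin.zero_eta, Fin.mk_one, Fin.reduceFinMk, Matrix.cons_val_zero,
        Matrix.cons_val_one, Matrix.head_cons, Matrix.cons_val_two, Matrix.tail_cons,
        Matrix.of_apply, Matrix.cons_val', Matrix.empty_val', Matrix.cons_val_fin_one,
        Matrix.head_fin_const]
    · exact hInt1
    · rw [e1]; exact hIntC _
    · rw [e2]; exact hIntC _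
    · exact hInt0
    · exact hInt1
    · exact hInt0
    · exact hInt0
    · exact hInt0
    · exact hInt1
  · -- C constant term upper triangular
    intro i j hij
    fin_cases i <;> fin_cases j <;>
      simp only [Fin.zero_eta, Fin.mk_one, Fin.reduceFinMk, Fin.isValue, Fin.val_zero,
        Fin.val_one, Fin.val_two, Matrix.cons_val_zero, Matrix.cons_val_one, Matrix.head_cons,
        Matrix.cons_val_two, Matrix.tail_cons, Matrix.of_apply, Matrix.cons_val',
        Matrix.empty_val', Matrix.cons_val_fin_one, Matrix.head_fin_const] at hij ⊢ <;>
      first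
        | omega
        | simp
  · -- det D = 1
    exact key_det (q : FF) (S : FF) (tF ^ a) (tF ^ (-(b : ℤ)) * (r : FF))
      ((S⁻¹ : ℂ⟦X⟧) : FF) hsi hv
  · -- entries of D integral
    intro i j
    fin_cases i <;> fin_cases j <;>
      simp only [Fin.zero_eta, Fin.mk_one, Fin.reduceFinMk, Matrix.cons_val_zero,
        Matrix.cons_val_one, Matrix.head_cons, Matrix.cons_val_two, Matrix.tail_cons,
        Matrix.of_apply, Matrix.cons_val', Matrix.empty_val', Matrix.cons_val_fin_one,
        Matrix.head_fin_const]
    · exact hIntC _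
    · exact hInt0
    · exact hInt0
    · rw [e3]; exact hIntC _
    · rw [e4]; exact hIntC _
    · rw [e7]; exact hIntneg _ (hIntC _)
    · rw [e5]; exact hIntC _
    · rw [e6]; exact hIntC _
    · rw [e4]; exact hIntC _
  · -- D constant term upper triangular
    intro i j hij
    fin_cases i <;> fin_cases j <;>
      simp only [Fin.zero_eta, Fin.mk_one, Fin.reduceFinMk, Matrix.cons_val_zero,
        Matrix.cons_val_one, Matrix.head_cons, Matrix.cons_val_two, Matrix.tail_cons,
        Matrix.of_apply, Matrix.cons_val', Matrix.empty_val', Matrix.cons_val_fin_one,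
        Matrix.head_fin_const] at hij ⊢ <;>
      first
        | omega
        | skip
    · rw [e3, hc0]
      simp [map_mul, constantCoeff_X, zero_pow (by omega : a ≠ 0)]
    · rw [e5, hc0]
      simp [map_pow, constantCoeff_X, zero_pow (by omega : 2 * a ≠ 0)]
    · rw [e6, hc0]
      simp [map_mul, constantCoeff_X, zero_pow (by omega : a ≠ 0)]
  · -- the product identity
    have hg : gpY q r a b =
        !![0, 0, -1; 0, -1, tF ^ (-(a : ℤ)) * (q : FF);
           -1, tF ^ (-(a : ℤ)) * (q : FF), tF ^ (-(b : ℤ)) * (r : FF)] := rfl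
    have h2a : (tF ^ ((2 * a : ℕ) : ℤ) : FF) = (tF ^ a) ^ 2 := by
      rw [zpow_natCast, pow_mul']
    rw [hg, h2a]
    exact key_mul (q : FF) (S : FF) (tF ^ a) (tF ^ (-(b : ℤ)) * (r : FF))
      ((S⁻¹ : ℂ⟦X⟧) : FF) (tF ^ (-(a : ℤ))) hsi hpi hv

end
end

section
/- Suppose q(0) ≠ 0, a ≥ 1, b = 2a, and r = −q². Then there exist C, D in the Iwahori subgroup 𝓑 such that C·(g·p(Y))·D is the monomial matrix with rows (0, −t^{a}, 0), (−t^{a}, 0, 0), (0, 0, −t^{−2a}); in particular g·p(Y) lies in the corresponding Iwahori double coset 𝓑·w·𝓑 in SL_3(F). -/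
/-! Statement 19 (Case 3 of the Proposition in §7 of "Cotangent bundle to the Flag
variety-I", for `SL₃`): if `q(0) ≠ 0`, `a ≥ 1`, `b = 2a` and `r = −q²`, then there
are `C, D` in the Iwahori subgroup `𝓑` with `C·(g·p(Y))·D` equal to the monomial
matrix with rows `(0, −t^a, 0)`, `(−t^a, 0, 0)`, `(0, 0, −t^{-2a})`. -/

noncomputable section

lemma stmt19_integral_coe (f : PowerSeries ℂ) : Integral (f : FF) := by
  intro m hm
  rw [PowerSeries.coeff_coe, if_pos hm]

lemma stmt19_integral_zero : Integral (0 : FF) := by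
  intro m _; simp

lemma stmt19_integral_one : Integral (1 : FF) := by
  rw [← PowerSeries.coe_one]; exact stmt19_integral_coe 1

lemma stmt19_integral_neg {x : FF} (hx : Integral x) : Integral (-x) := by
  intro m hm; simp [hx m hm]

lemma stmt19_tF_pow_coe (a : ℕ) : tF ^ (a : ℤ) = ((PowerSeries.X ^ a : PowerSeries ℂ) : FF) := by
  rw [zpow_natCast, PowerSeries.coe_pow, PowerSeries.coe_X]; rfl

lemma stmt19_tF_ne_zero : tF ≠ 0 :=
  HahnSeries.single_ne_zero (one_ne_zero (α := ℂ))

theorem stmt19 (q r : PowerSeries ℂ) (a b : ℕ) (ha : 1 ≤ a)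
    (hq : PowerSeries.constantCoeff q ≠ 0)
    (hab : b = 2 * a) (hrq : r = -q ^ 2) :
    ∃ C D : Matrix (Fin 3) (Fin 3) FF, MemIwahori C ∧ MemIwahori D ∧
      C * gpY q r a b * D =
        !![0, -(tF ^ (a : ℤ)), 0;
           -(tF ^ (a : ℤ)), 0, 0;
           0, 0, -(tF ^ (-((2 * a : ℕ) : ℤ)))] := by
  subst hab hrq
  set Q : FF := (q : FF) with hQdef
  set T : FF := tF ^ (a : ℤ) with hTdef
  clear_value Q T
  have hQQi : Q * ((q⁻¹ : PowerSeries ℂ) : FF) = 1 := by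
    rw [hQdef, ← PowerSeries.coe_mul, PowerSeries.mul_inv_cancel q hq, PowerSeries.coe_one]
  have hQi : ((q⁻¹ : PowerSeries ℂ) : FF) = Q⁻¹ := (inv_eq_of_mul_eq_one_right hQQi).symm
  have hQ0 : Q ≠ 0 := left_ne_zero_of_mul_eq_one hQQi
  have hT0 : T ≠ 0 := by rw [hTdef]; exact zpow_ne_zero _ stmt19_tF_ne_zero
  have hTcoe : T = ((PowerSeries.X ^ a : PowerSeries ℂ) : FF) := by
    rw [hTdef]; exact stmt19_tF_pow_coe a
  have hTi : tF ^ (-(a : ℤ)) = T⁻¹ := by rw [hTdef, zpow_neg]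
  have h2a : tF ^ (-((2 * a : ℕ) : ℤ)) = (T⁻¹) ^ 2 := by
    rw [show (-((2 * a : ℕ) : ℤ)) = (-(a : ℤ)) + (-(a : ℤ)) by push_cast; ring,
      zpow_add₀ stmt19_tF_ne_zero, hTi, sq]
  have hC13 : T ^ 2 * (Q⁻¹) ^ 2 = (((PowerSeries.X ^ a) ^ 2 * q⁻¹ ^ 2 : PowerSeries ℂ) : FF) := by
    rw [hTcoe, ← hQi]; push_cast; ring
  have hC23 : T * Q⁻¹ = ((PowerSeries.X ^ a * q⁻¹ : PowerSeries ℂ) : FF) := by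
    rw [hTcoe, ← hQi]; push_cast; ring
  have hD33 : (Q⁻¹) ^ 2 = ((q⁻¹ ^ 2 : PowerSeries ℂ) : FF) := by
    rw [← hQi]; push_cast; ring
  have hT00 : T.coeff 0 = 0 := by
    rw [hTcoe, PowerSeries.coeff_coe]
    simp [PowerSeries.coeff_X_pow]
    omega
  refine ⟨!![1, 0, -(T ^ 2 * (Q⁻¹) ^ 2); 0, 1, T * Q⁻¹; 0, 0, 1],
         !![Q, 0, 0; T, Q, 0; 0, T, (Q⁻¹) ^ 2], ?_, ?_, ?_⟩
  · refine ⟨by simp [Matrix.det_fin_three, Matrix.vecHead, Matrix.vecTail], ?_, ?_⟩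
    · intro i j
      fin_cases i <;> fin_cases j <;>
        simp only [Fin.zero_eta, Fin.mk_one, Fin.isValue, Matrix.cons_val', Matrix.cons_val_zero,
          Matrix.cons_val_one, Matrix.head_cons, Matrix.empty_val', Matrix.cons_val_fin_one,
          Matrix.cons_val_two, Matrix.tail_cons, Matrix.head_fin_const, Matrix.vecHead,
          Matrix.vecTail]
      · exact stmt19_integral_one
      · exact stmt19_integral_zero
      · rw [hC13]; exact stmt19_integral_neg (stmt19_integral_coe _)
      · exact stmt19_integral_zero
      · exact stmt19_integral_one
      · rw [hC23]; exact stmt19_integral_coe _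
      · exact stmt19_integral_zero
      · exact stmt19_integral_zero
      · exact stmt19_integral_one
    · intro i j hij
      fin_cases i <;> fin_cases j <;> simp [Matrix.vecHead, Matrix.vecTail] at hij ⊢
  · refine ⟨?_, ?_, ?_⟩
    · simp only [Matrix.det_fin_three, Matrix.of_apply, Function.comp_apply, Matrix.cons_val_succ, Matrix.cons_val', Matrix.cons_val_zero,
        Matrix.cons_val_one, Matrix.head_cons, Matrix.empty_val', Matrix.cons_val_fin_one,
        Matrix.cons_val_two, Matrix.tail_cons, Matrix.head_fin_const, Matrix.vecHead,
        Matrix.vecTail]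
      field_simp
      ring
    · intro i j
      fin_cases i <;> fin_cases j <;>
        simp only [Fin.zero_eta, Fin.mk_one, Fin.isValue, Matrix.cons_val', Matrix.cons_val_zero,
          Matrix.cons_val_one, Matrix.head_cons, Matrix.empty_val', Matrix.cons_val_fin_one,
          Matrix.cons_val_two, Matrix.tail_cons, Matrix.head_fin_const, Matrix.vecHead,
          Matrix.vecTail]
      · exact hQdef ▸ stmt19_integral_coe q
      · exact stmt19_integral_zero
      · exact stmt19_integral_zero
      · rw [hTcoe]; exact stmt19_integral_coe _
      · exact hQdef ▸ stmt19_integral_coe q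
      · exact stmt19_integral_zero
      · exact stmt19_integral_zero
      · rw [hTcoe]; exact stmt19_integral_coe _
      · rw [hD33]; exact stmt19_integral_coe _
    · intro i j hij
      fin_cases i <;> fin_cases j <;>
        simp only [Fin.zero_eta, Fin.mk_one, Fin.isValue, Matrix.cons_val', Matrix.cons_val_zero,
          Matrix.cons_val_one, Matrix.head_cons, Matrix.empty_val', Matrix.cons_val_fin_one,
          Matrix.cons_val_two, Matrix.tail_cons, Matrix.head_fin_const, Matrix.vecHead,
          Matrix.vecTail] at hij ⊢ <;>
        first
          | exact absurd hij (by omega)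
          | exact hT00
          | exact HahnSeries.coeff_zero
  · have hKey : gpY q (-q ^ 2) a (2 * a) =
        !![0, 0, -1; 0, -1, T⁻¹ * Q; -1, T⁻¹ * Q, -((T⁻¹) ^ 2 * Q ^ 2)] := by
      unfold gpY
      rw [hTi, h2a, ← hQdef, show ((-q ^ 2 : PowerSeries ℂ) : FF) = -(Q ^ 2) by
        rw [hQdef]; push_cast; ring]
      rw [show (T⁻¹) ^ 2 * -(Q ^ 2) = -((T⁻¹) ^ 2 * Q ^ 2) by ring]
    have hTT : T * T⁻¹ = 1 := mul_inv_cancel₀ hT0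
    have hQQ : Q * Q⁻¹ = 1 := mul_inv_cancel₀ hQ0
    rw [hKey, h2a, Matrix.mul_fin_three, Matrix.mul_fin_three, ← Matrix.ext_iff]
    intro i j
    fin_cases i <;> fin_cases j <;>
      simp only [Matrix.of_apply, Fin.zero_eta, Fin.mk_one, Fin.isValue, Matrix.cons_val',
        Matrix.cons_val_zero, Matrix.cons_val_one, Matrix.head_cons, Matrix.empty_val',
        Matrix.cons_val_fin_one, Matrix.cons_val_two, Matrix.cons_val_succ',
        Matrix.tail_cons, Matrix.head_fin_const, Matrix.vecHead, Matrix.vecTail]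
    · linear_combination (-(T ^ 2 * (Q⁻¹) ^ 2 * Q)) * hTT
    · linear_combination (T ^ 2 * T⁻¹ * (Q⁻¹) ^ 2 * Q ^ 2) * hTT
    · linear_combination ((Q⁻¹) ^ 2 * (T * T⁻¹ * Q * Q⁻¹ + 1) * Q * Q⁻¹) * hTT +
        ((Q⁻¹) ^ 2 * (T * T⁻¹ * Q * Q⁻¹ + 1)) * hQQ
    · linear_combination (T * Q * Q⁻¹) * hTT
    · linear_combination (Q - T * T⁻¹ * Q ^ 2 * Q⁻¹) * hTT
    · linear_combination (-(T⁻¹ * Q ^ 2 * (Q⁻¹) ^ 3)) * hTT + (-(T⁻¹ * Q * (Q⁻¹) ^ 2)) * hQQ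
    · linear_combination Q * hTT
    · linear_combination (-(T⁻¹ * Q ^ 2)) * hTT
    · linear_combination (-((T⁻¹) ^ 2 * (Q * Q⁻¹ + 1))) * hQQ
end
end
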